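/- Assume in addition that K is algebraically closed. Let p(X) = c X^{e_0} ∏_{i=1}^r (X − α_i)^{e_i} with c ≠ 0 and α_1,…,α_r distinct nonzero elements of K, e_i ≥ 1 for i ≥ 1. For each i, let (Ψ_{α_i,s})_{s≥1} be a Jordan chain at α_i. Then the family {Ψ_{α_i,k} : 1 ≤ i ≤ r, 1 ≤ k ≤ e_i} is a K-basis of ker(p(M)). -/

import Mathlib

open Polynomial
open scoped Classical

noncomputable section

/-- The q-integer {n}_q. -/
def qInt (K : Type*) [Field K] (q : K) (n : ℤ) : K :=
  if q = 1 then (n : K) else (q ^ n - 1) / (q - 1)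

/-- The multiplication operator `M` on formal Laurent series `L = ℤ → K`:
`(M a)(n) = a(n-1)`. -/
def Mop (K : Type*) [Field K] : Module.End K (ℤ → K) where
  toFun a := fun n => a (n - 1)
  map_add' _ _ := rfl
  map_smul' _ _ := rfl

/-- The q-difference operator `D_q` on `L = ℤ → K`: `(D_q a)(n) = {n+1}_q · a(n+1)`. -/
def Dq (K : Type*) [Field K] (q : K) : Module.End K (ℤ → K) where
  toFun a := fun n => qInt K q (n + 1) * a (n + 1)
  map_add' x y := by funext n; simp [Pi.add_apply, mul_add]
  map_smul' c x := by funext n; simp [Pi.smul_apply, smul_eq_mul]; ring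

/-- The element `Ψ_{α,1} ∈ L`, `Ψ_{α,1}(n) = α^{-n}`. -/
def Psi1 (K : Type*) [Field K] (α : K) : ℤ → K := fun n => α ^ (-n)

/-- A Jordan chain at `α`: a sequence `(Ψ_{α,s})_{s ≥ 1}` with first term `Ψ_{α,1}`
and `(M - α·id) Ψ_{α,s} = Ψ_{α,s-1}` for `s ≥ 2`. -/
def IsJordanChain (K : Type*) [Field K] (α : K) (Ψ : ℕ → ℤ → K) : Prop :=
  Ψ 1 = Psi1 K α ∧ ∀ s : ℕ, 2 ≤ s → Mop K (Ψ s) - α • Ψ s = Ψ (s - 1)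

namespace Stmt9

variable {K : Type*} [Field K]

/-- The operator `M - α`. -/
def g (α : K) : Module.End K (ℤ → K) := Mop K - α • 1

lemma g_apply (α : K) (a : ℤ → K) (n : ℤ) : g α a n = a (n - 1) - α * a n := rfl

lemma Mop_pow_apply : ∀ (k : ℕ) (a : ℤ → K) (n : ℤ), ((Mop K) ^ k) a n = a (n - k)
  | 0, a, n => by simp
  | (k+1), a, n => by
      rw [pow_succ, Module.End.mul_apply, Mop_pow_apply k]
      show a (n - k - 1) = a (n - (k+1 : ℕ))
      congr 1; push_cast; ring

variable {α : K} {Ψ : ℕ → ℤ → K}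

lemma g_psi1 (hα : α ≠ 0) : g α (Psi1 K α) = 0 := by
  funext n
  rw [g_apply]
  show (α : K) ^ (-(n-1)) - α * α ^ (-n) = (0 : ℤ → K) n
  rw [show -(n - 1) = 1 + (-n) by ring, zpow_add₀ hα, zpow_one]
  show α * α ^ (-n) - α * α ^ (-n) = 0
  ring

lemma chain_one (hα : α ≠ 0) (hΨ : IsJordanChain K α Ψ) : g α (Ψ 1) = 0 := by
  rw [hΨ.1]; exact g_psi1 hα

lemma chain_step (hΨ : IsJordanChain K α Ψ) (s : ℕ) (hs : 1 ≤ s) :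
    g α (Ψ (s + 1)) = Ψ s := by
  have h := hΨ.2 (s + 1) (by omega)
  have h2 : s + 1 - 1 = s := by omega
  rw [h2] at h
  show (Mop K - α • 1) (Ψ (s+1)) = Ψ s
  rw [LinearMap.sub_apply, LinearMap.smul_apply, Module.End.one_apply]
  exact h

lemma g_pow_chain (hΨ : IsJordanChain K α Ψ) :
    ∀ (k s : ℕ), 1 ≤ s → ((g α) ^ k) (Ψ (s + k)) = Ψ s
  | 0, s, _ => by simp
  | (k+1), s, hs => by
      rw [pow_succ, Module.End.mul_apply]
      have h : s + (k + 1) = (s + k) + 1 := by omega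
      rw [h, chain_step hΨ (s + k) (by omega)]
      exact g_pow_chain hΨ k s hs

lemma chain_mem_ker (hα : α ≠ 0) (hΨ : IsJordanChain K α Ψ) (k : ℕ) (hk : 1 ≤ k) :
    ((g α) ^ k) (Ψ k) = 0 := by
  obtain ⟨m, rfl⟩ : ∃ m, k = m + 1 := ⟨k - 1, by omega⟩
  rw [pow_succ', Module.End.mul_apply, show m + 1 = 1 + m by omega,
    g_pow_chain hΨ m 1 le_rfl, chain_one hα hΨ]

lemma mem_ker_pow_of_le {m k : ℕ} (hmk : m ≤ k) {x : ℤ → K}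
    (hx : ((g α) ^ m) x = 0) : ((g α) ^ k) x = 0 := by
  obtain ⟨d, rfl⟩ := Nat.exists_eq_add_of_le hmk
  rw [add_comm, pow_add, Module.End.mul_apply, hx, map_zero]

lemma ker_g (hα : α ≠ 0) :
    LinearMap.ker (g α) = Submodule.span K {Psi1 K α} := by
  apply le_antisymm
  · intro a ha
    rw [LinearMap.mem_ker] at ha
    have key : ∀ n : ℤ, a (n - 1) = α * a n := by
      intro n
      have h := congrFun ha n
      rw [g_apply, Pi.zero_apply] at h
      exact sub_eq_zero.1 h
    have haa : a = (a 0) • Psi1 K α := by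
      funext n
      show a n = a 0 * α ^ (-n)
      induction n using Int.induction_on with
      | zero => simp
      | succ n ih =>
        have h := key (n + 1)
        rw [show ((n : ℤ) + 1) - 1 = n by ring] at h
        have h2 : a ((n : ℤ) + 1) = α⁻¹ * a n := by
          rw [h]; field_simp
        rw [h2, ih, show -((n : ℤ) + 1) = (-1) + (-n) by ring, zpow_add₀ hα]
        simp [zpow_neg_one]; ring
      | pred n ih =>
        have h := key (-n)
        rw [h, ih, show -(-(n:ℤ) - 1) = 1 + (-(-(n:ℤ))) by ring, zpow_add₀ hα, zpow_one]
        ring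
    rw [haa]
    exact Submodule.smul_mem _ _ (Submodule.subset_span rfl)
  · rw [Submodule.span_le, Set.singleton_subset_iff]
    exact LinearMap.mem_ker.2 (g_psi1 hα)

lemma ker_g_pow (hα : α ≠ 0) (hΨ : IsJordanChain K α Ψ) :
    ∀ k : ℕ, LinearMap.ker ((g α) ^ k) =
      Submodule.span K (Set.range fun j : Fin k => Ψ (j + 1))
  | 0 => by
      rw [pow_zero]
      simp [Submodule.span_eq_bot, LinearMap.ker_eq_bot', Module.End.one_apply]
  | (k+1) => by
      apply le_antisymm
      · intro a ha
        rw [LinearMap.mem_ker, pow_succ, Module.End.mul_apply] at ha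
        have ha' : g α a ∈ LinearMap.ker ((g α) ^ k) := ha
        rw [ker_g_pow hα hΨ k] at ha'
        obtain ⟨cf, hcf⟩ := (Submodule.mem_span_range_iff_exists_fun K).1 ha'
        set b : ℤ → K := a - ∑ j : Fin k, cf j • Ψ (j + 2) with hb
        have hgb : g α b = 0 := by
          rw [hb, map_sub, map_sum]
          have : ∀ j : Fin k, g α (cf j • Ψ ((j : ℕ) + 2)) = cf j • Ψ ((j : ℕ) + 1) := by
            intro j
            rw [map_smul, show (j : ℕ) + 2 = ((j : ℕ) + 1) + 1 by omega,
              chain_step hΨ ((j : ℕ) + 1) (by omega)]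
          rw [Finset.sum_congr rfl fun j _ => this j, hcf]
          exact sub_eq_zero.2 rfl
        have hbmem : b ∈ LinearMap.ker (g α) := LinearMap.mem_ker.2 hgb
        rw [ker_g hα] at hbmem
        obtain ⟨d, hd⟩ := Submodule.mem_span_singleton.1 hbmem
        have haeq : a = d • Ψ 1 + ∑ j : Fin k, cf j • Ψ ((j : ℕ) + 2) := by
          rw [hΨ.1, hd, hb]; abel
        rw [haeq]
        apply Submodule.add_mem
        · exact Submodule.smul_mem _ _ (Submodule.subset_span ⟨⟨0, by omega⟩, rfl⟩)
        · apply Submodule.sum_mem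
          intro j _
          exact Submodule.smul_mem _ _ (Submodule.subset_span
            ⟨⟨(j : ℕ) + 1, by omega⟩, by simp⟩)
      · rw [Submodule.span_le]
        rintro _ ⟨j, rfl⟩
        exact LinearMap.mem_ker.2 (mem_ker_pow_of_le (by omega)
          (chain_mem_ker hα hΨ ((j : ℕ) + 1) (by omega)))

lemma indep_chain (hα : α ≠ 0) (hΨ : IsJordanChain K α Ψ) :
    ∀ k : ℕ, LinearIndependent K (fun j : Fin k => Ψ (j + 1))
  | 0 => linearIndependent_empty_type
  | (k+1) => by
      have hfun : (fun j : Fin (k+1) => Ψ ((j : ℕ) + 1)) =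
          Fin.snoc (fun j : Fin k => Ψ ((j : ℕ) + 1)) (Ψ (k + 1)) := by
        funext j
        induction j using Fin.lastCases with
        | last => simp
        | cast i => simp
      rw [hfun, linearIndependent_fin_snoc]
      refine ⟨indep_chain hα hΨ k, ?_⟩
      rw [← ker_g_pow hα hΨ k]
      intro hmem
      have h0 : ((g α) ^ k) (Ψ (k + 1)) = 0 := LinearMap.mem_ker.1 hmem
      rw [show k + 1 = 1 + k by omega, g_pow_chain hΨ k 1 le_rfl, hΨ.1] at h0
      have := congrFun h0 0
      simp [Psi1] at this

lemma ker_aeval_prod {ι : Type*} (f : Module.End K (ℤ → K))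
    (s : Finset ι) (q : ι → K[X]) (hq : Set.Pairwise s (Function.onFun IsCoprime q)) :
    LinearMap.ker (aeval f (∏ i ∈ s, q i)) = ⨆ i ∈ s, LinearMap.ker (aeval f (q i)) := by
  induction s using Finset.induction_on with
  | empty => simp [LinearMap.ker_eq_bot', Module.End.one_apply]
  | @insert a s has ih =>
    have hcop : IsCoprime (q a) (∏ i ∈ s, q i) :=
      IsCoprime.prod_right fun i hi => hq (Finset.mem_insert_self a s)
        (Finset.mem_insert_of_mem hi) (by rintro rfl; exact has hi)
    rw [Finset.prod_insert has, ← Polynomial.sup_ker_aeval_eq_ker_aeval_mul_of_coprime f hcop,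
      ih (hq.mono (by simp [Finset.subset_insert]))]
    rw [Finset.iSup_insert]

lemma g_eq (α : K) : g α = Mop K - α • 1 := rfl

end Stmt9

open Stmt9

/-- if `p(X) = c X^{e_0} ∏_{i=1}^r (X − α_i)^{e_i}` with `c ≠ 0` and the `α_i`
distinct and nonzero, then `{Ψ_{α_i,k} : 1 ≤ i ≤ r, 1 ≤ k ≤ e_i}` is a basis of `ker p(M)`. -/

theorem basis_ker_pM (K : Type*) [Field K] [IsAlgClosed K] (q : K) (hq : q ≠ 0)
    (hqi : ∀ n : ℤ, n ≠ 0 → qInt K q n ≠ 0)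
    (c : K) (hc : c ≠ 0) (e0 : ℕ) (r : ℕ)
    (α : Fin r → K) (hα0 : ∀ i, α i ≠ 0) (hinj : Function.Injective α)
    (e : Fin r → ℕ) (he : ∀ i, 1 ≤ e i)
    (Ψ : Fin r → ℕ → ℤ → K) (hΨ : ∀ i, IsJordanChain K (α i) (Ψ i))
    (p : K[X]) (hp : p = C c * X ^ e0 * ∏ i, (X - C (α i)) ^ e i) :
    LinearIndependent K (fun x : Σ i : Fin r, Fin (e i) => Ψ x.1 ((x.2 : ℕ) + 1)) ∧
    Submodule.span K (Set.range (fun x : Σ i : Fin r, Fin (e i) => Ψ x.1 ((x.2 : ℕ) + 1))) =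
      LinearMap.ker (aeval (Mop K) p) := by
  have hglem : ∀ (β : K) (m : ℕ),
      aeval (Mop K) ((X - C β) ^ m) = (g β) ^ m := by
    intro β m
    rw [map_pow, map_sub, aeval_X, aeval_C, Module.algebraMap_end_eq_smul_id, g_eq]
    rfl
  have hker : ∀ i, LinearMap.ker (aeval (Mop K) ((X - C (α i)) ^ (e i))) =
      Submodule.span K (Set.range fun j : Fin (e i) => Ψ i ((j : ℕ) + 1)) := by
    intro i; rw [hglem, ker_g_pow (hα0 i) (hΨ i) (e i)]
  have hle : ∀ j, Submodule.span K (Set.range fun j2 : Fin (e j) => Ψ j ((j2 : ℕ) + 1)) ≤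
      (Mop K).genEigenspace (α j) ⊤ := by
    intro j
    rw [← ker_g_pow (hα0 j) (hΨ j) (e j)]
    intro x hx
    rw [Module.End.mem_genEigenspace]
    exact ⟨e j, le_top, by rw [← g_eq]; exact hx⟩
  constructor
  · apply linearIndependent_iUnion_finite
      (f := fun i => fun j : Fin (e i) => Ψ i ((j : ℕ) + 1))
      (fun i => indep_chain (hα0 i) (hΨ i) (e i))
    intro i t _ hit
    have hindep := ((Mop K).independent_genEigenspace ⊤).comp hinj
    refine Disjoint.mono (hle i) ?_ (hindep i)
    apply iSup_le; intro j; apply iSup_le; intro hj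
    refine le_trans (hle j) ?_
    exact le_iSup₂ (f := fun j (_ : j ≠ i) => (Mop K).genEigenspace (α j) ⊤) j
      (by rintro rfl; exact hit hj)
  · have hinj0 : Function.Injective (aeval (Mop K) (C c * X ^ e0)) := by
      have h1 : ∀ (x : ℤ → K) (n : ℤ),
          (aeval (Mop K) (C c * X ^ e0)) x n = c * x (n - e0) := by
        intro x n
        rw [map_mul, aeval_C, aeval_X_pow, Module.algebraMap_end_eq_smul_id,
          Module.End.mul_apply, LinearMap.smul_apply, LinearMap.id_apply,
          Pi.smul_apply, smul_eq_mul, Mop_pow_apply]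
      intro a b hab
      funext n
      have h2 := congrFun hab (n + e0)
      rw [h1, h1] at h2
      have h3 := mul_left_cancel₀ hc h2
      simpa using h3
    have hkerp : LinearMap.ker (aeval (Mop K) p) =
        LinearMap.ker (aeval (Mop K) (∏ i, (X - C (α i)) ^ e i)) := by
      rw [hp, map_mul]
      ext x
      simp only [LinearMap.mem_ker, Module.End.mul_apply]
      constructor
      · intro hx
        exact hinj0 (by rw [hx, map_zero])
      · intro hx
        rw [hx, map_zero]
    have hcop : Set.Pairwise (Finset.univ : Finset (Fin r))
        (Function.onFun IsCoprime fun i => (X - C (α i)) ^ e i) := by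
      intro i _ j _ hij
      exact ((pairwise_coprime_X_sub_C hinj) hij).pow
    rw [hkerp, ker_aeval_prod (Mop K) Finset.univ _ hcop,
      Set.range_sigma_eq_iUnion_range, Submodule.span_iUnion]
    simp only [Finset.mem_univ, iSup_true, iSup_pos]
    exact iSup_congr fun i => (hker i).symm
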